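/- Let I be a set of indexes equipped with a well-founded strict order ≻, and for each α ∈ I let ⊢⊣_α be a symmetric relation and →_α a relation on a set A; put ⇒_α = ⊢⊣_α ∪ →_α. For J ⊆ I write →_J, ⊢⊣_J, ⇒_J for the unions over α ∈ J, write ⇔_J for the symmetric closure of ⇒_J, and write ⋎J = {β ∈ I | ∃ α ∈ J, β ≺ α}; for a single index α write ⋎α for ⋎{α}. Suppose that for all α, β ∈ I: (i) ←_α ∘ →_β ⊆ (⇔_{⋎α ∪ ⋎β})*, and (ii) ⊢⊣_α ∘ →_β ⊆ (⇔_{⋎α ∪ ⋎β})*. Then →_I is Church-Rosser modulo (⊢⊣_I)*. -/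

import Mathlib

namespace AbstractCRM

open Relation

variable {A I : Type*}

/-- One-step multiset order: `M` is obtained from `N` by replacing one
element by finitely many `r`-smaller ones (`r z a` : `z` smaller than `a`). -/
def OneStep (r : I → I → Prop) (M N : Multiset I) : Prop :=
  ∃ (X Z : Multiset I) (a : I), N = a ::ₘ X ∧ M = X + Z ∧ ∀ z ∈ Z, r z a

theorem acc_oneStep_cons {r : I → I → Prop} {a : I} (ha : Acc r a) :
    ∀ M, Acc (OneStep r) M → Acc (OneStep r) (a ::ₘ M) := by
  induction ha with
  | intro a _ iha =>
    intro M hM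
    induction hM with
    | intro M hMacc ihM =>
      have haccM : Acc (OneStep r) M := Acc.intro M hMacc
      have hadd : ∀ Z : Multiset I, (∀ z ∈ Z, r z a) →
          ∀ M', Acc (OneStep r) M' → Acc (OneStep r) (M' + Z) := by
        intro Z
        induction Z using Multiset.induction with
        | empty => intro _ M' hM'; simpa using hM'
        | cons z Z ih =>
          intro hz M' hM'
          rw [Multiset.add_cons]
          exact iha z (hz z (Multiset.mem_cons_self z Z)) _
            (ih (fun w hw => hz w (Multiset.mem_cons_of_mem hw)) M' hM')
      constructor
      intro N hN
      obtain ⟨X, Z, b, hN1, hN2, hZ⟩ := hN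
      rcases Multiset.cons_eq_cons.1 hN1 with ⟨hab, hMX⟩ | ⟨hab, cs, hMcs, hXcs⟩
      · subst hab; subst hN2; rw [← hMX]
        exact hadd Z hZ M haccM
      · have hstep : OneStep r (cs + Z) M := ⟨cs, Z, b, hMcs, rfl, hZ⟩
        have := ihM _ hstep
        rw [hN2, hXcs, Multiset.cons_add]
        exact this

theorem oneStep_wf {r : I → I → Prop} (h : WellFounded r) : WellFounded (OneStep r) := by
  constructor
  intro M
  induction M using Multiset.induction with
  | empty =>
    constructor
    rintro N ⟨X, Z, b, hN1, -, -⟩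
    exact absurd hN1.symm Multiset.cons_ne_zero
  | cons a M ih => exact acc_oneStep_cons (h.apply a) M ih

theorem oneStep2 {r : I → I → Prop} (X Z : Multiset I) (α β : I)
    (h : ∀ z ∈ Z, r z α ∨ r z β) :
    TransGen (OneStep r) (X + Z) (α ::ₘ β ::ₘ X) := by
  classical
  set Zα := Z.filter (fun z => r z α) with hZα
  set Zβ := Z.filter (fun z => ¬ r z α) with hZβ
  have hsplit : Zα + Zβ = Z := Multiset.filter_add_not _ Z
  have step1 : OneStep r (β ::ₘ X + Zα) (α ::ₘ β ::ₘ X) :=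
    ⟨β ::ₘ X, Zα, α, rfl, rfl, fun z hz => (Multiset.mem_filter.1 hz).2⟩
  have step2 : OneStep r ((X + Zα) + Zβ) (β ::ₘ (X + Zα)) := by
    refine ⟨X + Zα, Zβ, β, rfl, rfl, fun z hz => ?_⟩
    have := Multiset.mem_filter.1 hz
    exact (h z this.1).resolve_left this.2
  have heq : (X + Zα) + Zβ = X + Z := by rw [add_assoc, hsplit]
  have heq2 : β ::ₘ X + Zα = β ::ₘ (X + Zα) := Multiset.cons_add _ _ _
  have step2' : OneStep r (X + Z) (β ::ₘ (X + Zα)) := heq ▸ step2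
  have step1' : OneStep r (β ::ₘ (X + Zα)) (α ::ₘ β ::ₘ X) := heq2 ▸ step1
  exact TransGen.head step2' (TransGen.single step1')

inductive Kind | F | B | E
deriving DecidableEq

def doStep (hd ar : I → A → A → Prop) : I × Kind → A → A → Prop
  | (γ, .F), x, y => ar γ x y
  | (γ, .B), x, y => ar γ y x
  | (γ, .E), x, y => hd γ x y

inductive Seq (hd ar : I → A → A → Prop) : A → List (I × Kind) → A → Prop
  | nil (a : A) : Seq hd ar a [] a
  | cons {a b c : A} {s : I × Kind} {L : List (I × Kind)} :
      doStep hd ar s a b → Seq hd ar b L c → Seq hd ar a (s :: L) c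

variable {hd ar : I → A → A → Prop}

theorem Seq.append {a b c : A} {L1 L2 : List (I × Kind)}
    (h1 : Seq hd ar a L1 b) (h2 : Seq hd ar b L2 c) : Seq hd ar a (L1 ++ L2) c := by
  induction h1 with
  | nil => simpa
  | cons hs _ ih => exact Seq.cons hs (ih h2)

theorem Seq.split {a c : A} {L1 L2 : List (I × Kind)}
    (h : Seq hd ar a (L1 ++ L2) c) : ∃ b, Seq hd ar a L1 b ∧ Seq hd ar b L2 c := by
  induction L1 generalizing a with
  | nil => exact ⟨a, Seq.nil a, h⟩
  | cons s L1 ih =>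
    cases h with
    | cons hs htl =>
      obtain ⟨b, hb1, hb2⟩ := ih htl
      exact ⟨b, Seq.cons hs hb1, hb2⟩

theorem Seq.cons_inv {a c : A} {s : I × Kind} {L : List (I × Kind)}
    (h : Seq hd ar a (s :: L) c) : ∃ b, doStep hd ar s a b ∧ Seq hd ar b L c := by
  cases h with
  | cons hs h => exact ⟨_, hs, h⟩

theorem Seq.rtg_F {a b : A} {L : List (I × Kind)} (h : Seq hd ar a L b)
    (hF : ∀ s ∈ L, s.2 = Kind.F) :
    ReflTransGen (fun x y => ∃ α, ar α x y) a b := by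
  induction h with
  | nil => exact .refl
  | @cons a b c s L hs _ ih =>
    have h2 := hF s List.mem_cons_self
    obtain ⟨γ, k⟩ := s
    simp only at h2; subst h2
    exact ReflTransGen.head ⟨γ, hs⟩ (ih fun t ht => hF t (List.mem_cons_of_mem _ ht))

theorem Seq.rtg_E {a b : A} {L : List (I × Kind)} (h : Seq hd ar a L b)
    (hE : ∀ s ∈ L, s.2 = Kind.E) :
    ReflTransGen (fun x y => ∃ α, hd α x y) a b := by
  induction h with
  | nil => exact .refl
  | @cons a b c s L hs _ ih =>
    have h2 := hE s List.mem_cons_self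
    obtain ⟨γ, k⟩ := s
    simp only at h2; subst h2
    exact ReflTransGen.head ⟨γ, hs⟩ (ih fun t ht => hE t (List.mem_cons_of_mem _ ht))

theorem Seq.rtg_B {a b : A} {L : List (I × Kind)} (h : Seq hd ar a L b)
    (hB : ∀ s ∈ L, s.2 = Kind.B) :
    ReflTransGen (fun x y => ∃ α, ar α x y) b a := by
  induction h with
  | nil => exact .refl
  | @cons a b c s L hs _ ih =>
    have h2 := hB s List.mem_cons_self
    obtain ⟨γ, k⟩ := s
    simp only at h2; subst h2
    exact ReflTransGen.tail (ih fun t ht => hB t (List.mem_cons_of_mem _ ht)) ⟨γ, hs⟩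

/-- Structural lemma: every step-list is either a valley `F* E* B*` or
contains an adjacent bad pair `(B,F)`, `(E,F)` or `(B,E)`. -/
theorem steps_cases (L : List (I × Kind)) :
    (∃ L1 L2 L3 : List (I × Kind), L = L1 ++ L2 ++ L3 ∧ (∀ s ∈ L1, s.2 = Kind.F) ∧
      (∀ s ∈ L2, s.2 = Kind.E) ∧ (∀ s ∈ L3, s.2 = Kind.B)) ∨
    (∃ (P Q : List (I × Kind)) (s1 s2 : I × Kind), L = P ++ s1 :: s2 :: Q ∧
      (((s1.2 = Kind.B ∨ s1.2 = Kind.E) ∧ s2.2 = Kind.F) ∨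
        (s1.2 = Kind.B ∧ s2.2 = Kind.E))) := by
  induction L with
  | nil => exact Or.inl ⟨[], [], [], by simp, by simp, by simp, by simp⟩
  | cons x L ih =>
    rcases ih with ⟨L1, L2, L3, hL, h1, h2, h3⟩ | ⟨P, Q, s1, s2, hL, hbad⟩
    · subst hL
      rcases hk : x.2 with _ | _ | _
      · refine Or.inl ⟨x :: L1, L2, L3, by simp, ?_, h2, h3⟩
        intro s hs
        rcases List.mem_cons.1 hs with rfl | hs
        · exact hk
        · exact h1 s hs
      · cases L1 with
        | cons y L1' =>
          exact Or.inr ⟨[], L1' ++ L2 ++ L3, x, y, by simp,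
            Or.inl ⟨Or.inl hk, h1 y List.mem_cons_self⟩⟩
        | nil =>
          cases L2 with
          | cons y L2' =>
            exact Or.inr ⟨[], L2' ++ L3, x, y, by simp,
              Or.inr ⟨hk, h2 y List.mem_cons_self⟩⟩
          | nil =>
            refine Or.inl ⟨[], [], x :: L3, by simp, by simp, by simp, ?_⟩
            intro s hs
            rcases List.mem_cons.1 hs with rfl | hs
            · exact hk
            · exact h3 s hs
      · cases L1 with
        | cons y L1' =>
          exact Or.inr ⟨[], L1' ++ L2 ++ L3, x, y, by simp,
            Or.inl ⟨Or.inr hk, h1 y List.mem_cons_self⟩⟩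
        | nil =>
          refine Or.inl ⟨[], x :: L2, L3, by simp, by simp, ?_, h3⟩
          intro s hs
          rcases List.mem_cons.1 hs with rfl | hs
          · exact hk
          · exact h2 s hs
    · subst hL
      exact Or.inr ⟨x :: P, Q, s1, s2, by simp, hbad⟩

theorem rtg_to_seq {succ : I → I → Prop}
    (hsym : ∀ α a b, hd α a b → hd α b a) (α β : I) {x z : A}
    (h : ReflTransGen (fun x y =>
        (∃ γ, (succ α γ ∨ succ β γ) ∧ (hd γ x y ∨ ar γ x y)) ∨
        (∃ γ, (succ α γ ∨ succ β γ) ∧ (hd γ y x ∨ ar γ y x))) x z) :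
    ∃ L, Seq hd ar x L z ∧ ∀ s ∈ L, succ α s.1 ∨ succ β s.1 := by
  induction h with
  | refl => exact ⟨[], Seq.nil _, by simp⟩
  | @tail b c _ hstep ih =>
    obtain ⟨L, hL, hb⟩ := ih
    have ext : ∀ s : I × Kind, doStep hd ar s b c → (succ α s.1 ∨ succ β s.1) →
        ∃ L', Seq hd ar x L' c ∧ ∀ t ∈ L', succ α t.1 ∨ succ β t.1 := by
      intro s hs hbound
      refine ⟨L ++ [s], hL.append (Seq.cons hs (Seq.nil _)), ?_⟩
      intro t ht
      rcases List.mem_append.1 ht with ht | ht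
      · exact hb t ht
      · simp at ht; subst ht; exact hbound
    rcases hstep with ⟨γ, hγ, hh | ha⟩ | ⟨γ, hγ, hh | ha⟩
    · exact ext (γ, Kind.E) hh hγ
    · exact ext (γ, Kind.F) ha hγ
    · exact ext (γ, Kind.E) (hsym γ c b hh) hγ
    · exact ext (γ, Kind.B) ha hγ

end AbstractCRM

open AbstractCRM Relation in
/-- Lemma 2.2 (basis of the abstract criterion for Church-Rosser modulo).
`succ α β` means `α ≻ β` (so `β ≺ α`); `hd α` is the symmetric relation `⊢⊣_α`,
`ar α` is `→_α`.  `⋎α ∪ ⋎β = {γ | γ ≺ α ∨ γ ≺ β}`. -/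
theorem abstract_crm_indexed {A I : Type*} (succ : I → I → Prop)
    (hd ar : I → A → A → Prop)
    (hirrefl : ∀ α, ¬ succ α α)
    (htrans : ∀ α β γ, succ α β → succ β γ → succ α γ)
    (hwf : ¬ ∃ f : ℕ → I, ∀ n, succ (f n) (f (n + 1)))
    (hsym : ∀ α a b, hd α a b → hd α b a)
    (hi : ∀ α β a b c, ar α b a → ar β b c →
      Relation.ReflTransGen (fun x y =>
        (∃ γ, (succ α γ ∨ succ β γ) ∧ (hd γ x y ∨ ar γ x y)) ∨
        (∃ γ, (succ α γ ∨ succ β γ) ∧ (hd γ y x ∨ ar γ y x))) a c)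
    (hii : ∀ α β a b c, hd α a b → ar β b c →
      Relation.ReflTransGen (fun x y =>
        (∃ γ, (succ α γ ∨ succ β γ) ∧ (hd γ x y ∨ ar γ x y)) ∨
        (∃ γ, (succ α γ ∨ succ β γ) ∧ (hd γ y x ∨ ar γ y x))) a c) :
    ∀ a b, Relation.ReflTransGen (fun x y =>
        (∃ α, ar α x y) ∨ (∃ α, ar α y x) ∨ (∃ α, hd α x y)) a b →
      ∃ u v, Relation.ReflTransGen (fun x y => ∃ α, ar α x y) a u ∧
        Relation.ReflTransGen (fun x y => ∃ α, hd α x y) u v ∧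
        Relation.ReflTransGen (fun x y => ∃ α, ar α x y) b v := by
  classical
  intro a b hab
  -- well-foundedness of the inverse of succ
  have hwf' : WellFounded (fun β α => succ α β) := by
    constructor
    intro a0
    by_contra hacc
    apply hwf
    have key : ∀ x : I, ¬ Acc (fun β α => succ α β) x →
        ∃ y, succ x y ∧ ¬ Acc (fun β α => succ α β) y := by
      intro x hx
      by_contra hcon
      push_neg at hcon
      exact hx (Acc.intro x hcon)
    have step : ∀ p : {x : I // ¬ Acc (fun β α => succ α β) x},
        ∃ q : {x : I // ¬ Acc (fun β α => succ α β) x}, succ p.1 q.1 := by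
      rintro ⟨x, hx⟩
      obtain ⟨y, hy1, hy2⟩ := key x hx
      exact ⟨⟨y, hy2⟩, hy1⟩
    choose g hg using step
    refine ⟨fun n => (g^[n] ⟨a0, hacc⟩).1, fun n => ?_⟩
    show succ (g^[n] ⟨a0, hacc⟩).1 (g^[n + 1] ⟨a0, hacc⟩).1
    rw [Function.iterate_succ_apply']
    exact hg _
  set r : I → I → Prop := fun z w => succ w z with hr
  have wfms : WellFounded (TransGen (OneStep r)) := (oneStep_wf hwf').transGen
  -- main well-founded induction
  have main : ∀ M : Multiset I, ∀ (x y : A) (L : List (I × Kind)),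
      (↑(L.map Prod.fst) : Multiset I) = M → Seq hd ar x L y →
      ∃ u v, ReflTransGen (fun x y => ∃ α, ar α x y) x u ∧
        ReflTransGen (fun x y => ∃ α, hd α x y) u v ∧
        ReflTransGen (fun x y => ∃ α, ar α x y) y v := by
    intro M
    induction M using wfms.induction with
    | _ M IH =>
      intro x y L hmeas hseq
      subst hmeas
      rcases steps_cases L with ⟨L1, L2, L3, rfl, h1, h2, h3⟩ | ⟨P, Q, s1, s2, rfl, hbad⟩
      · obtain ⟨v0, h12, h3seq⟩ := Seq.split hseq
        obtain ⟨u, hxu, huv⟩ := Seq.split h12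
        exact ⟨u, v0, hxu.rtg_F h1, huv.rtg_E h2, h3seq.rtg_B h3⟩
      · obtain ⟨p, hxp, hrest⟩ := Seq.split hseq
        obtain ⟨q, hs1, hrest2⟩ := hrest.cons_inv
        obtain ⟨rr, hs2, hQy⟩ := hrest2.cons_inv
        obtain ⟨α, k1⟩ := s1
        obtain ⟨β, k2⟩ := s2
        simp only at hbad
        -- build the bounded replacement conversion from p to rr
        have hconv : ReflTransGen (fun x y =>
            (∃ γ, (succ α γ ∨ succ β γ) ∧ (hd γ x y ∨ ar γ x y)) ∨
            (∃ γ, (succ α γ ∨ succ β γ) ∧ (hd γ y x ∨ ar γ y x))) p rr := by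
          rcases hbad with ⟨hk1 | hk1, hk2⟩ | ⟨hk1, hk2⟩
          · subst hk1; subst hk2
            exact hi α β p q rr hs1 hs2
          · subst hk1; subst hk2
            exact hii α β p q rr hs1 hs2
          · subst hk1; subst hk2
            have h' := hii β α rr q p (hsym β q rr hs2) hs1
            have hsymm : Symmetric (fun x y =>
                (∃ γ, (succ β γ ∨ succ α γ) ∧ (hd γ x y ∨ ar γ x y)) ∨
                (∃ γ, (succ β γ ∨ succ α γ) ∧ (hd γ y x ∨ ar γ y x))) :=
              fun x y h => h.symm
            have h'' := (@Relation.ReflTransGen.stdSymm _ _ ⟨hsymm⟩).symm _ _ h'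
            refine ReflTransGen.mono (fun x y h => ?_) _ _ h''
            rcases h with ⟨γ, hb, hc⟩ | ⟨γ, hb, hc⟩
            · exact Or.inl ⟨γ, hb.symm, hc⟩
            · exact Or.inr ⟨γ, hb.symm, hc⟩
        obtain ⟨L', hL', hbound⟩ := rtg_to_seq hsym α β hconv
        have hnew : Seq hd ar x (P ++ (L' ++ Q)) y :=
          hxp.append (hL'.append hQy)
        -- measure decrease
        set X : Multiset I := ↑(P.map Prod.fst) + ↑(Q.map Prod.fst) with hX
        set Z : Multiset I := ↑(L'.map Prod.fst) with hZ
        have hzb : ∀ z ∈ Z, r z α ∨ r z β := by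
          intro z hz
          rw [hZ] at hz
          simp only [Multiset.mem_coe, List.mem_map] at hz
          obtain ⟨s, hs, rfl⟩ := hz
          exact hbound s hs
        have hdec := oneStep2 (r := r) X Z α β hzb
        have e1 : (↑((P ++ (L' ++ Q)).map Prod.fst) : Multiset I) = X + Z := by
          simp only [List.map_append, hX, hZ, ← Multiset.coe_add]
          push_cast
          abel
        have e2 : (↑((P ++ (α, k1) :: (β, k2) :: Q).map Prod.fst) : Multiset I)
            = α ::ₘ β ::ₘ X := by
          simp only [List.map_append, List.map_cons, hX, ← Multiset.coe_add,
            ← Multiset.cons_coe]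
          push_cast
          rw [Multiset.add_cons, Multiset.add_cons]
        rw [← e1, ← e2] at hdec
        exact IH _ hdec x y _ rfl hnew
  -- convert the hypothesis conversion into a Seq
  have hseq : ∃ L, Seq hd ar a L b := by
    clear hi hii
    induction hab with
    | refl => exact ⟨[], Seq.nil a⟩
    | @tail b c _ hstep ih =>
      obtain ⟨L, hL⟩ := ih
      rcases hstep with ⟨γ, h⟩ | ⟨γ, h⟩ | ⟨γ, h⟩
      · exact ⟨L ++ [(γ, Kind.F)], hL.append (Seq.cons h (Seq.nil _))⟩
      · exact ⟨L ++ [(γ, Kind.B)], hL.append (Seq.cons h (Seq.nil _))⟩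
      · exact ⟨L ++ [(γ, Kind.E)], hL.append (Seq.cons h (Seq.nil _))⟩
  obtain ⟨L, hL⟩ := hseq
  exact main _ a b L rfl hL
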